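/- Let η > 0 be real and let A and B be n×n real symmetric positive definite matrices; put S = (A+B)/2, M = √(S⁻¹)·((A−B)/2)·√(S⁻¹), and let l₁,…,lₙ be the (real) eigenvalues of the symmetric matrix M with multiplicity. Then 2^{ηn} · det(A)^{η/2} · det(B)^{η/2} / det(A+B)^η = ∏_{j=1}^n (1 − l_j²)^{η/2}, where all powers are real powers of positive real numbers. -/

import Mathlib

namespace Matrix.PosSemidef

open scoped ComplexOrder

/-- The positive semidefinite square root of a positive semidefinite matrix
(the definition removed from Mathlib, restored with its old meaning). -/
noncomputable def sqrt {n : Type*} [Fintype n] [DecidableEq n] {𝕜 : Type*} [RCLike 𝕜]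
    {A : Matrix n n 𝕜} (hA : A.PosSemidef) : Matrix n n 𝕜 :=
  hA.1.eigenvectorUnitary.1 * Matrix.diagonal ((↑) ∘ (Real.sqrt ·) ∘ hA.1.eigenvalues) *
    (star hA.1.eigenvectorUnitary : Matrix n n 𝕜)

end Matrix.PosSemidef

lemma sqrt_mul_self_aux {n : ℕ} {A : Matrix (Fin n) (Fin n) ℝ} (hA : A.PosSemidef) :
    hA.sqrt * hA.sqrt = A := by
  have hUU : star (hA.1.eigenvectorUnitary : Matrix (Fin n) (Fin n) ℝ) *
      (hA.1.eigenvectorUnitary : Matrix (Fin n) (Fin n) ℝ) = 1 :=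
    (Matrix.mem_unitaryGroup_iff').mp hA.1.eigenvectorUnitary.2
  unfold Matrix.PosSemidef.sqrt
  conv_rhs => rw [hA.1.spectral_theorem, Unitary.conjStarAlgAut_apply]
  simp only [mul_assoc]
  rw [← mul_assoc (star _) _ (Matrix.diagonal _ * _), hUU, Matrix.one_mul,
    ← mul_assoc (Matrix.diagonal _) (Matrix.diagonal _), Matrix.diagonal_mul_diagonal]
  congr 3
  funext i
  simp [Real.mul_self_sqrt (hA.eigenvalues_nonneg i)]

lemma sqrt_isHermitian_aux {n : ℕ} {A : Matrix (Fin n) (Fin n) ℝ} (hA : A.PosSemidef) :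
    hA.sqrt.IsHermitian := by
  unfold Matrix.PosSemidef.sqrt Matrix.IsHermitian
  simp [Matrix.conjTranspose_mul, Matrix.star_eq_conjTranspose, mul_assoc]

open Matrix

/-- Congruence of a positive definite matrix by an invertible symmetric real matrix. -/
lemma posDef_conj_aux {n : ℕ} {A R : Matrix (Fin n) (Fin n) ℝ} (hA : A.PosDef)
    (hR : Rᵀ = R) (hRdet : R.det ≠ 0) : (R * A * R).PosDef := by
  have hAt : Aᵀ = A := by
    rw [← conjTranspose_eq_transpose_of_trivial]; exact hA.1
  refine PosDef.of_dotProduct_mulVec_pos ?_ ?_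
  · show (R * A * R)ᴴ = R * A * R
    simp [conjTranspose_eq_transpose_of_trivial, transpose_mul, hR, hAt, mul_assoc]
  · intro x hx
    have hinj : Function.Injective (R.mulVec) :=
      mulVec_injective_iff_isUnit.2 ((Matrix.isUnit_iff_isUnit_det R).mpr
        (isUnit_iff_ne_zero.2 hRdet))
    have hRx : R *ᵥ x ≠ 0 := fun h => hx (hinj (by simpa using h))
    have hvm : x ᵥ* R = R *ᵥ x := by rw [← vecMul_transpose, hR]
    have key : star x ⬝ᵥ ((R * A * R) *ᵥ x) = star (R *ᵥ x) ⬝ᵥ (A *ᵥ (R *ᵥ x)) := by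
      simp only [star_trivial, ← mulVec_mulVec]
      rw [dotProduct_mulVec x R, hvm]
    rw [key]
    exact hA.dotProduct_mulVec_pos hRx

/-- det of a conjugated sum formula via spectral theorem:
`det (1 + c • M)` equals the product over eigenvalues. -/
lemma det_one_add_smul_eq_prod {n : ℕ} {M : Matrix (Fin n) (Fin n) ℝ}
    (hMh : M.IsHermitian) (c : ℝ) :
    (1 + c • M).det = ∏ j, (1 + c * hMh.eigenvalues j) := by
  set U := (hMh.eigenvectorUnitary : Matrix (Fin n) (Fin n) ℝ) with hU
  have hUU : U * star U = 1 := (Matrix.mem_unitaryGroup_iff).mp hMh.eigenvectorUnitary.2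
  have hspec := hMh.spectral_theorem
  have h1 : 1 + c • M = U * (1 + c • diagonal (RCLike.ofReal ∘ hMh.eigenvalues)) * star U := by
    rw [mul_add, add_mul, mul_one, hUU, mul_smul_comm, smul_mul_assoc]
    conv_lhs => rw [hspec]
    rfl
  rw [h1, det_mul_right_comm, hUU, one_mul]
  have : (1 : Matrix (Fin n) (Fin n) ℝ) + c • diagonal (RCLike.ofReal ∘ hMh.eigenvalues)
      = diagonal (fun j => 1 + c * hMh.eigenvalues j) := by
    rw [← diagonal_one, ← diagonal_smul, ← diagonal_add]
    congr 1
  rw [this, det_diagonal]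

/-- For `η > 0` and `A`, `B` real symmetric positive definite, with `S = (A+B)/2`,
`M = √(S⁻¹)·((A−B)/2)·√(S⁻¹)` and `l₁, …, lₙ` the eigenvalues of the symmetric matrix `M`:
`2^{ηn} · det(A)^{η/2} · det(B)^{η/2} / det(A+B)^η = ∏ⱼ (1 − l_j²)^{η/2}`,
all powers being real powers of positive reals. -/
theorem bartlett_likelihood_ratio {n : ℕ} (η : ℝ) (hη : 0 < η)
    (A B : Matrix (Fin n) (Fin n) ℝ) (hA : A.PosDef) (hB : B.PosDef)
    (S M : Matrix (Fin n) (Fin n) ℝ)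
    (hS : S = (2 : ℝ)⁻¹ • (A + B)) (hSpd : S.PosDef)
    (hM : M = hSpd.inv.posSemidef.sqrt * ((2 : ℝ)⁻¹ • (A - B)) * hSpd.inv.posSemidef.sqrt)
    (hMh : M.IsHermitian) :
    (2 : ℝ) ^ (η * n) * A.det ^ (η / 2) * B.det ^ (η / 2) / (A + B).det ^ η =
      ∏ j, (1 - hMh.eigenvalues j ^ 2) ^ (η / 2) := by
  classical
  set R := hSpd.inv.posSemidef.sqrt with hRdef
  set l := hMh.eigenvalues with hl
  have hRR : R * R = S⁻¹ := sqrt_mul_self_aux hSpd.inv.posSemidef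
  have hRh : Rᵀ = R := by
    rw [← conjTranspose_eq_transpose_of_trivial]
    exact sqrt_isHermitian_aux hSpd.inv.posSemidef
  have hs : 0 < S.det := hSpd.det_pos
  have hSdetu : IsUnit S.det := isUnit_iff_ne_zero.2 hs.ne'
  have hSinvdet : S⁻¹.det = S.det⁻¹ := by rw [det_nonsing_inv, Ring.inverse_eq_inv']
  have hR2 : R.det * R.det = S.det⁻¹ := by rw [← det_mul, hRR, hSinvdet]
  have hRdet : R.det ≠ 0 := by
    intro h
    rw [h, mul_zero] at hR2
    exact (inv_pos.2 hs).ne' hR2.symm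
  have hRu : IsUnit R.det := isUnit_iff_ne_zero.2 hRdet
  have hRSR : R * S * R = 1 := by
    have hSeq : S = (R * R)⁻¹ := by rw [hRR, nonsing_inv_nonsing_inv S hSdetu]
    rw [hSeq, Matrix.mul_inv_rev, mul_assoc, mul_assoc,
      Matrix.nonsing_inv_mul R hRu, mul_one, Matrix.mul_nonsing_inv R hRu]
  have hSA : S + (2⁻¹ : ℝ) • (A - B) = A := by rw [hS]; module
  have hSB : S - (2⁻¹ : ℝ) • (A - B) = B := by rw [hS]; module
  have h1p : 1 + M = R * A * R := by
    conv_rhs => rw [← hSA, mul_add, add_mul, hRSR]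
    rw [hM]
  have h1m : 1 - M = R * B * R := by
    conv_rhs => rw [← hSB, mul_sub, sub_mul, hRSR]
    rw [hM]
  have hPA : (R * A * R).PosDef := posDef_conj_aux hA hRh hRdet
  have hPB : (R * B * R).PosDef := posDef_conj_aux hB hRh hRdet
  -- eigenvalue bounds
  have hlt : ∀ j, 0 < 1 - l j ∧ 0 < 1 + l j := by
    intro j
    have hveq : M *ᵥ ⇑(hMh.eigenvectorBasis j) = l j • ⇑(hMh.eigenvectorBasis j) :=
      hMh.mulVec_eigenvectorBasis j
    set v : Fin n → ℝ := ⇑(hMh.eigenvectorBasis j) with hv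
    have hvne : v ≠ 0 := by
      intro h
      apply hMh.eigenvectorBasis.orthonormal.ne_zero j
      ext i
      exact congrFun h i
    have hvv : 0 < v ⬝ᵥ v := by
      rcases Function.ne_iff.mp hvne with ⟨i, hi⟩
      have hi' : v i ≠ 0 := hi
      exact Finset.sum_pos' (fun k _ => mul_self_nonneg _)
        ⟨i, Finset.mem_univ i, mul_self_pos.mpr hi'⟩
    have hp : 0 < (1 + l j) * (v ⬝ᵥ v) := by
      have := hPA.dotProduct_mulVec_pos hvne
      rw [← h1p] at this
      rw [add_mulVec, one_mulVec, hveq, star_trivial, dotProduct_add,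
        dotProduct_smul] at this
      calc (0:ℝ) < v ⬝ᵥ v + l j • (v ⬝ᵥ v) := this
        _ = (1 + l j) * (v ⬝ᵥ v) := by simp [smul_eq_mul]; ring
    have hm : 0 < (1 - l j) * (v ⬝ᵥ v) := by
      have := hPB.dotProduct_mulVec_pos hvne
      rw [← h1m] at this
      rw [sub_mulVec, one_mulVec, hveq, star_trivial, dotProduct_sub,
        dotProduct_smul] at this
      calc (0:ℝ) < v ⬝ᵥ v - l j • (v ⬝ᵥ v) := this
        _ = (1 - l j) * (v ⬝ᵥ v) := by simp [smul_eq_mul]; ring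
    exact ⟨(mul_pos_iff.mp hm).elim (fun h => h.1)
        (fun h => absurd hvv (not_lt.2 h.2.le)),
      (mul_pos_iff.mp hp).elim (fun h => h.1)
        (fun h => absurd hvv (not_lt.2 h.2.le))⟩
  -- determinant identities
  have hdetp : (1 + M).det = ∏ j, (1 + l j) := by
    simpa using det_one_add_smul_eq_prod hMh 1
  have hdetm : (1 - M).det = ∏ j, (1 - l j) := by
    have := det_one_add_smul_eq_prod hMh (-1)
    simpa [sub_eq_add_neg] using this
  have hdA : (1 + M).det = S.det⁻¹ * A.det := by
    rw [h1p, det_mul, det_mul]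
    linear_combination A.det * hR2
  have hdB : (1 - M).det = S.det⁻¹ * B.det := by
    rw [h1m, det_mul, det_mul]
    linear_combination B.det * hR2
  have hprod : ∏ j, (1 - l j ^ 2) = A.det * B.det * (S.det⁻¹ * S.det⁻¹) := by
    have : ∀ j, 1 - l j ^ 2 = (1 + l j) * (1 - l j) := fun j => by ring
    rw [Finset.prod_congr rfl fun j _ => this j, Finset.prod_mul_distrib,
      ← hdetp, ← hdetm, hdA, hdB]
    ring
  have hdetAB : (A + B).det = 2 ^ n * S.det := by
    have h2S : A + B = (2 : ℝ) • S := by rw [hS]; module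
    rw [h2S, det_smul]
    simp
  -- pass to real arithmetic
  have hRHS : ∏ j, (1 - l j ^ 2) ^ (η / 2)
      = (A.det * B.det * (S.det⁻¹ * S.det⁻¹)) ^ (η / 2) := by
    rw [← hprod]
    exact Real.finset_prod_rpow Finset.univ _ (fun j _ => by nlinarith [hlt j]) (η / 2)
  rw [hRHS, hdetAB]
  have ha : 0 < A.det := hA.det_pos
  have hb : 0 < B.det := hB.det_pos
  have key : ∀ a b s : ℝ, 0 < a → 0 < b → 0 < s →
      2 ^ (η * (n:ℝ)) * a ^ (η/2) * b ^ (η/2) / (((2:ℝ)^n * s) ^ η)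
        = (a * b * (s⁻¹ * s⁻¹)) ^ (η/2) := by
    intro a b s ha hb hs
    have hsinv : 0 < s⁻¹ := inv_pos.2 hs
    rw [Real.mul_rpow (by positivity) hs.le, ← Real.rpow_natCast (2:ℝ) n,
      ← Real.rpow_mul (by norm_num : (0:ℝ) ≤ 2),
      Real.mul_rpow (by positivity) (by positivity),
      Real.mul_rpow ha.le hb.le,
      Real.mul_rpow hsinv.le hsinv.le,
      ← Real.rpow_add hsinv,
      show η / 2 + η / 2 = η by ring,
      Real.inv_rpow hs.le, mul_comm ((n:ℝ)) η]
    have h2 : (0:ℝ) < (2:ℝ) ^ (η * (n:ℝ)) := Real.rpow_pos_of_pos (by norm_num) _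
    have hsη : (0:ℝ) < s ^ η := Real.rpow_pos_of_pos hs _
    field_simp
  exact key _ _ _ ha hb hs
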